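/- arXiv:1309.0210 — 7 statements merged into one kernel-verified Lean document; each statement's English description precedes it below -/
import Mathlib

section
/- Let f : ℝ → ℝ be smooth (infinitely differentiable) and 2π-periodic. If ∫_0^{2π} f(θ)·(a(θ)·b′(θ) − a′(θ)·b(θ)) dθ = 0 for all smooth 2π-periodic functions a, b : ℝ → ℝ, then f is identically zero. -/
open Real

/-- A continuous periodic function whose square integrates to zero over a period vanishes. -/
lemma zero_of_sq_intervalIntegral_eq_zero (g : ℝ → ℝ) (hg : Continuous g)
    (hper : Function.Periodic g (2 * π))
    (hzero : (∫ θ in (0:ℝ)..(2 * π), (g θ) ^ 2) = 0) : ∀ θ : ℝ, g θ = 0 := by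
  intro θ
  by_contra hne
  have hsqper : Function.Periodic (fun x => (g x) ^ 2) (2 * π) := fun x => by
    simp [hper x]
  have hI : (∫ x in (θ - π)..(θ - π + 2 * π), (g x) ^ 2) = 0 := by
    rw [hsqper.intervalIntegral_add_eq (θ - π) 0]
    simpa using hzero
  have hpos : 0 < (g θ) ^ 2 := by positivity
  have hcont : Continuous fun x => (g x) ^ 2 := by continuity
  obtain ⟨ε, hε, hball⟩ := Metric.eventually_nhds_iff.mp
    ((hcont.tendsto θ).eventually (eventually_gt_nhds hpos))
  set δ := min ε π / 2 with hδdef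
  have hδpos : 0 < δ := by positivity
  have hδε : δ < ε := by
    have := min_le_left ε π
    have hεpos := hε
    simp only [hδdef]
    linarith [min_le_left ε π]
  have hδπ : δ ≤ π := by
    have := min_le_right ε π
    simp only [hδdef]; linarith
  have hmidpos : 0 < ∫ x in (θ - δ)..(θ + δ), (g x) ^ 2 := by
    apply intervalIntegral.intervalIntegral_pos_of_pos_on
    · exact hcont.intervalIntegrable _ _
    · intro x hx
      apply hball
      rw [Real.dist_eq, abs_lt]
      constructor <;> [linarith [hx.1]; linarith [hx.2]]
    · linarith
  have hmono : (∫ x in (θ - δ)..(θ + δ), (g x) ^ 2) ≤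
      ∫ x in (θ - π)..(θ - π + 2 * π), (g x) ^ 2 := by
    apply intervalIntegral.integral_mono_interval (by linarith) (by linarith) (by linarith)
    · filter_upwards with x using by positivity
    · exact hcont.intervalIntegrable _ _
  linarith [hI ▸ hmono]

/-- If a smooth `2π`-periodic function `f : ℝ → ℝ` satisfies
`∫_0^{2π} f(θ)·(a(θ)·b′(θ) − a′(θ)·b(θ)) dθ = 0` for all smooth `2π`-periodic
functions `a, b : ℝ → ℝ`, then `f` is identically zero. -/
theorem vanishing_on_commutators_implies_zero
    (f : ℝ → ℝ) (hf : ContDiff ℝ (⊤ : ℕ∞) f) (hfper : ∀ θ : ℝ, f (θ + 2 * π) = f θ)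
    (h : ∀ a b : ℝ → ℝ, ContDiff ℝ (⊤ : ℕ∞) a → (∀ θ : ℝ, a (θ + 2 * π) = a θ) →
      ContDiff ℝ (⊤ : ℕ∞) b → (∀ θ : ℝ, b (θ + 2 * π) = b θ) →
      (∫ θ in (0:ℝ)..(2 * π), f θ * (a θ * deriv b θ - deriv a θ * b θ)) = 0) :
    ∀ θ : ℝ, f θ = 0 := by
  have hfc : Continuous f := hf.continuous
  set c : ℝ := (∫ t in (0:ℝ)..(2 * π), f t) / (2 * π) with hc
  have hπ : (2 : ℝ) * π ≠ 0 := by positivity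
  have hIf : (∫ t in (0:ℝ)..(2 * π), f t) = 2 * π * c := by
    rw [hc]
    field_simp [hc]
  set b : ℝ → ℝ := fun θ => (∫ t in (0:ℝ)..θ, f t) - c * θ with hbdef
  have hbder : ∀ θ : ℝ, HasDerivAt b (f θ - c) θ := by
    intro θ
    exact ((hfc.integral_hasStrictDerivAt 0 θ).hasDerivAt).sub
      ((hasDerivAt_id θ).const_mul c |>.congr_deriv (by ring))
  have hbderiv : deriv b = fun θ => f θ - c := funext fun θ => (hbder θ).deriv
  have hbcd : ContDiff ℝ (⊤ : ℕ∞) b := by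
    rw [contDiff_infty_iff_deriv]
    exact ⟨fun θ => (hbder θ).differentiableAt, hbderiv ▸ hf.sub contDiff_const⟩
  have hfper' : Function.Periodic f (2 * π) := hfper
  have hbper : ∀ θ : ℝ, b (θ + 2 * π) = b θ := by
    intro θ
    have hsplit : (∫ t in (0:ℝ)..(θ + 2 * π), f t)
        = (∫ t in (0:ℝ)..θ, f t) + ∫ t in θ..(θ + 2 * π), f t :=
      (intervalIntegral.integral_add_adjacent_intervals (hfc.intervalIntegrable _ _)
        (hfc.intervalIntegrable _ _)).symm
    have hper : (∫ t in θ..(θ + 2 * π), f t) = ∫ t in (0:ℝ)..(2 * π), f t := by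
      simpa using hfper'.intervalIntegral_add_eq θ 0
    simp only [hbdef, hsplit, hper, hIf]
    ring
  -- test with a = 1, b
  have h1 := h (fun _ => 1) b contDiff_const (fun _ => rfl) hbcd hbper
  simp only [deriv_const', hbderiv] at h1
  have h1' : (∫ θ in (0:ℝ)..(2 * π), f θ * (f θ - c)) = 0 :=
    (intervalIntegral.integral_congr
      (g := fun θ => f θ * (1 * (f θ - c) - 0 * b θ)) (fun x _ => by ring)).trans h1
  have hsub : (∫ θ in (0:ℝ)..(2 * π), (f θ - c)) = 0 := by
    rw [intervalIntegral.integral_sub (hfc.intervalIntegrable _ _)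
      (intervalIntegrable_const), hIf]
    simp only [intervalIntegral.integral_const, smul_eq_mul, sub_zero]
    ring
  have hsq : (∫ θ in (0:ℝ)..(2 * π), (f θ - c) ^ 2) = 0 := by
    have : (∫ θ in (0:ℝ)..(2 * π), (f θ - c) ^ 2)
        = (∫ θ in (0:ℝ)..(2 * π), f θ * (f θ - c)) - c * ∫ θ in (0:ℝ)..(2 * π), (f θ - c) := by
      rw [← intervalIntegral.integral_const_mul, ← intervalIntegral.integral_sub (f := fun θ => f θ * (f θ - c)) (g := fun θ => c * (f θ - c))
        ((hfc.mul (hfc.sub continuous_const)).intervalIntegrable _ _)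
        ((continuous_const.mul (hfc.sub continuous_const)).intervalIntegrable _ _)]
      apply intervalIntegral.integral_congr
      intro x _
      ring
    rw [this, h1', hsub]
    ring
  have hfeqc : ∀ θ : ℝ, f θ = c := by
    intro θ
    have := zero_of_sq_intervalIntegral_eq_zero (fun x => f x - c)
      (hfc.sub continuous_const) (fun x => by simp [hfper x]) hsq θ
    linarith
  -- test with a = sin, b = cos to get c = 0
  have h2 := h Real.sin Real.cos Real.contDiff_sin
    (fun θ => Real.sin_add_two_pi θ) Real.contDiff_cos (fun θ => Real.cos_add_two_pi θ)
  have h2' : (∫ θ in (0:ℝ)..(2 * π), f θ * (Real.sin θ * deriv Real.cos θ -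
      deriv Real.sin θ * Real.cos θ)) = ∫ θ in (0:ℝ)..(2 * π), (-c : ℝ) := by
    apply intervalIntegral.integral_congr
    intro x _
    simp only [Real.deriv_cos, Real.deriv_sin, hfeqc x]
    linear_combination (-c) * Real.sin_sq_add_cos_sq x
  rw [h2', intervalIntegral.integral_const] at h2
  have hc0 : c = 0 := by
    have : (2 * π - 0) • (-c) = 0 := h2
    simp only [smul_eq_mul, sub_zero] at this
    rcases mul_eq_zero.mp this with h' | h'
    · exact absurd h' hπ
    · linarith
  intro θ
  rw [hfeqc θ, hc0]
end

section
/- Let X be a topological space, A a commutative group, and f a function assigning to each x ∈ X and each loop l based at x (a path from x to x) an element f x l ∈ A. For each pair x, y ∈ X define a relation on (Path x y) × A by (γ₁, a₁) ∼ (γ₂, a₂) if and only if a₁ = f x (γ₁.trans γ₂.symm) · a₂. Then f satisfies the fusion condition if and only if for every x, y ∈ X the relation ∼ on (Path x y) × A is an equivalence relation. -/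
/-- For a function `f` assigning to each point `x` of a topological space `X` and each
loop based at `x` an element of a commutative group `A`, the fusion condition
`f x (γ₁.trans γ₂.symm) * f x (γ₂.trans γ₃.symm) = f x (γ₁.trans γ₃.symm)` holds
(for all paths `γ₁, γ₂, γ₃` with the same endpoints) if and only if, for every pair of
points `x, y`, the relation `(γ₁, a₁) ∼ (γ₂, a₂) ↔ a₁ = f x (γ₁.trans γ₂.symm) * a₂`
on `(Path x y) × A` is an equivalence relation. -/
theorem fusion_iff_equivalence {X : Type*} [TopologicalSpace X] {A : Type*} [CommGroup A]
    (f : ∀ x : X, Path x x → A) :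
    (∀ (x y : X) (γ₁ γ₂ γ₃ : Path x y),
        f x (γ₁.trans γ₂.symm) * f x (γ₂.trans γ₃.symm) = f x (γ₁.trans γ₃.symm)) ↔
      (∀ x y : X,
        Equivalence (fun p q : Path x y × A => p.2 = f x (p.1.trans q.1.symm) * q.2)) := by
  constructor
  · intro h x y
    have h1 : ∀ γ : Path x y, f x (γ.trans γ.symm) = 1 := by
      intro γ
      have := h x y γ γ γ
      exact left_eq_mul.mp this.symm ▸ (mul_eq_left.mp this)
    refine ⟨fun p => ?_, fun {p q} hpq => ?_, fun {p q r} hpq hqr => ?_⟩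
    · rw [h1, one_mul]
    · have h2 : f x (q.1.trans p.1.symm) * f x (p.1.trans q.1.symm) = 1 := by
        rw [h x y q.1 p.1 q.1, h1]
      rw [hpq, ← mul_assoc, h2, one_mul]
    · rw [hpq, hqr, ← mul_assoc, h x y p.1 q.1 r.1]
  · intro h x y γ₁ γ₂ γ₃
    have := (h x y).trans (x := (γ₁, f x (γ₁.trans γ₂.symm) * f x (γ₂.trans γ₃.symm)))
      (y := (γ₂, f x (γ₂.trans γ₃.symm))) (z := (γ₃, 1)) rfl (mul_one _).symm
    simpa using this
end

section
/- Let X be a topological space, A a commutative group, and f a function assigning to each x ∈ X and each loop based at x an element of A, satisfying the fusion condition and invariant under reparametrization. Then f x (Path.refl x) = 1; f x (l.symm) = (f x l)⁻¹ for every loop l based at x; and f x (l₁.trans l₂) = (f x l₁) · (f x l₂) for all loops l₁, l₂ based at x. In particular f is multiplicative under the figure-of-eight (concatenation) product of based loops. -/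
open unitInterval Set

namespace FusAux

variable {X : Type*} [TopologicalSpace X]

noncomputable def φ₁ : I → I := fun t => projIcc 0 1 zero_le_one (2 * (t : ℝ))
noncomputable def φ₂ : I → I := fun t => projIcc 0 1 zero_le_one (2 * (t : ℝ) - 1)

lemma φ₁_cont : Continuous φ₁ := continuous_projIcc.comp (by continuity)
lemma φ₂_cont : Continuous φ₂ := continuous_projIcc.comp (by continuity)
lemma φ₁_mono : Monotone φ₁ := fun a b hab => by
  apply monotone_projIcc
  have : (a:ℝ) ≤ b := hab
  linarith
lemma φ₂_mono : Monotone φ₂ := fun a b hab => by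
  apply monotone_projIcc
  have : (a:ℝ) ≤ b := hab
  linarith
lemma φ₁_zero : φ₁ 0 = 0 := by
  simp only [φ₁, Icc.coe_zero, mul_zero]
  rw [projIcc_of_le_left _ le_rfl]; rfl
lemma φ₁_one : φ₁ 1 = 1 := by
  simp only [φ₁, Icc.coe_one, mul_one]
  rw [projIcc_of_right_le _ (by norm_num)]; rfl
lemma φ₂_zero : φ₂ 0 = 0 := by
  simp only [φ₂, Icc.coe_zero, mul_zero, zero_sub]
  rw [projIcc_of_le_left _ (by norm_num)]; rfl
lemma φ₂_one : φ₂ 1 = 1 := by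
  simp only [φ₂, Icc.coe_one, mul_one]
  norm_num

lemma trans_refl_eq {x : X} (l : Path x x) :
    l.trans (Path.refl x) = l.reparam φ₁ φ₁_cont φ₁_zero φ₁_one := by
  ext t
  rw [Path.trans_apply]
  simp only [Path.coe_reparam, Function.comp_apply, φ₁]
  split_ifs with h
  · rw [projIcc_of_mem _ ⟨by linarith [t.2.1], by linarith⟩]
  · push_neg at h
    rw [projIcc_of_right_le _ (by linarith)]
    simp [Path.refl]; rfl

lemma refl_trans_eq {x : X} (l : Path x x) :
    (Path.refl x).trans l = l.reparam φ₂ φ₂_cont φ₂_zero φ₂_one := by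
  ext t
  rw [Path.trans_apply]
  simp only [Path.coe_reparam, Function.comp_apply, φ₂]
  split_ifs with h
  · rw [projIcc_of_le_left _ (by linarith)]
    simp [Path.refl]; rfl
  · push_neg at h
    rw [projIcc_of_mem _ ⟨by linarith, by linarith [t.2.2]⟩]

end FusAux

/-- If `f`, assigning to each point `x` of a topological space `X` and each loop based at
`x` an element of a commutative group `A`, satisfies the fusion condition and is invariant
under (monotone) reparametrization of loops, then `f x (Path.refl x) = 1`,
`f x l.symm = (f x l)⁻¹`, and `f` is multiplicative under the figure-of-eight
(concatenation) product of based loops: `f x (l₁.trans l₂) = f x l₁ * f x l₂`. -/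
theorem fusive_implies_figure_of_eight {X : Type*} [TopologicalSpace X]
    {A : Type*} [CommGroup A] (f : ∀ x : X, Path x x → A)
    (hfus : ∀ (x y : X) (γ₁ γ₂ γ₃ : Path x y),
      f x (γ₁.trans γ₂.symm) * f x (γ₂.trans γ₃.symm) = f x (γ₁.trans γ₃.symm))
    (hrep : ∀ (x : X) (l : Path x x) (φ : I → I) (hφc : Continuous φ) (_ : Monotone φ)
      (hφ₀ : φ 0 = 0) (hφ₁ : φ 1 = 1), f x (l.reparam φ hφc hφ₀ hφ₁) = f x l) :
    (∀ x : X, f x (Path.refl x) = 1) ∧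
      (∀ (x : X) (l : Path x x), f x l.symm = (f x l)⁻¹) ∧
      (∀ (x : X) (l₁ l₂ : Path x x), f x (l₁.trans l₂) = f x l₁ * f x l₂) := by
  have htr : ∀ (x : X) (l : Path x x), f x (l.trans (Path.refl x)) = f x l := fun x l => by
    rw [FusAux.trans_refl_eq, hrep _ _ _ _ FusAux.φ₁_mono]
  have hrt : ∀ (x : X) (l : Path x x), f x ((Path.refl x).trans l) = f x l := fun x l => by
    rw [FusAux.refl_trans_eq, hrep _ _ _ _ FusAux.φ₂_mono]
  have hmul : ∀ (x : X) (l₁ l₂ : Path x x), f x (l₁.trans l₂) = f x l₁ * f x l₂ := by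
    intro x l₁ l₂
    have := hfus x x l₁ (Path.refl x) l₂.symm
    rw [Path.refl_symm, Path.symm_symm, htr, hrt] at this
    exact this.symm
  have hcancel : ∀ (x y : X) (γ : Path x y), f x (γ.trans γ.symm) = 1 := by
    intro x y γ
    have := hfus x y γ γ γ
    exact mul_left_cancel (a := f x (γ.trans γ.symm)) (by rw [this, mul_one])
  have hone : ∀ x : X, f x (Path.refl x) = 1 := by
    intro x
    have := hcancel x x (Path.refl x)
    rwa [Path.refl_symm, htr] at this
  refine ⟨hone, fun x l => ?_, hmul⟩
  have h1 := hcancel x x l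
  rw [hmul] at h1
  exact eq_inv_of_mul_eq_one_left (mul_comm (f x l) (f x l.symm) ▸ h1)
end

section
/- Let f : ℝ → ℝ be continuously differentiable (ContDiff ℝ 1). Let X = C(AddCircle (2π), ℝ) be the Banach space of continuous real-valued functions on the circle with the supremum norm, and let μ be the Haar measure on AddCircle (2π). Define F : X → ℝ by F(u) = ∫ f(u(θ)) dμ(θ). Then for every u ∈ X there exists a continuous linear functional L : X →L[ℝ] ℝ such that L(v) = ∫ f′(u(θ))·v(θ) dμ(θ) for all v ∈ X, and F is Fréchet differentiable at u with derivative L (HasFDerivAt F L u). -/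
open Real MeasureTheory

instance : Fact (0 < 2 * π) := ⟨by positivity⟩

/-- For `f : ℝ → ℝ` continuously differentiable, the nonlinear functional
`F(u) = ∫_{S¹} f(u(θ)) dθ` on the Banach space `C(S¹, ℝ)` of continuous functions on the
circle `S¹ = ℝ/2πℤ` (with the supremum norm and Haar measure) is Fréchet differentiable
at every `u`, with derivative the continuous linear functional
`v ↦ ∫_{S¹} f′(u(θ))·v(θ) dθ`. -/
theorem first_derivative_of_loop_functional
    (f : ℝ → ℝ) (hf : ContDiff ℝ 1 f)
    (F : C(AddCircle (2 * π), ℝ) → ℝ)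
    (hF : ∀ u : C(AddCircle (2 * π), ℝ), F u = ∫ θ : AddCircle (2 * π), f (u θ)) :
    ∀ u : C(AddCircle (2 * π), ℝ),
      ∃ L : C(AddCircle (2 * π), ℝ) →L[ℝ] ℝ,
        (∀ v : C(AddCircle (2 * π), ℝ), L v = ∫ θ : AddCircle (2 * π), deriv f (u θ) * v θ) ∧
        HasFDerivAt F L u := by
  intro u
  set S := AddCircle (2 * π) with hS
  have hfc : Continuous f := hf.continuous
  have hg : Continuous (deriv f) := hf.continuous_deriv le_rfl
  have hfd : Differentiable ℝ f := hf.differentiable one_ne_zero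
  -- every continuous function on the (compact) circle is integrable
  have key : ∀ h : S → ℝ, Continuous h → Integrable h (volume : Measure S) := fun h hh =>
    hh.integrable_of_hasCompactSupport (HasCompactSupport.of_compactSpace h)
  set T : ℝ := ((volume : Measure S) Set.univ).toReal with hT
  have hT0 : 0 ≤ T := ENNReal.toReal_nonneg
  -- the candidate derivative as a linear map
  let φ : C(S, ℝ) →ₗ[ℝ] ℝ :=
    { toFun := fun v => ∫ θ : S, deriv f (u θ) * v θ
      map_add' := by
        intro v w
        simp only [ContinuousMap.add_apply, mul_add]
        exact integral_add (key _ ((hg.comp u.continuous).mul v.continuous))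
          (key _ ((hg.comp u.continuous).mul w.continuous))
      map_smul' := by
        intro c v
        simp only [ContinuousMap.smul_apply, smul_eq_mul, RingHom.id_apply]
        rw [← integral_const_mul]
        congr 1; ext θ; ring }
  set w : C(S, ℝ) := (ContinuousMap.mk (deriv f) hg).comp u with hw
  have hwθ : ∀ θ : S, |deriv f (u θ)| ≤ ‖w‖ := fun θ => by
    simpa [hw] using w.norm_coe_le_norm θ
  have hφbound : ∀ v : C(S, ℝ), ‖φ v‖ ≤ (‖w‖ * T) * ‖v‖ := by
    intro v
    have : ‖φ v‖ ≤ (‖w‖ * ‖v‖) * T := by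
      refine norm_integral_le_of_norm_le_const ?_
      filter_upwards with θ
      have h1 : |deriv f (u θ)| ≤ ‖w‖ := hwθ θ
      have h2 : |v θ| ≤ ‖v‖ := v.norm_coe_le_norm θ
      calc ‖deriv f (u θ) * v θ‖ = |deriv f (u θ)| * |v θ| := abs_mul _ _
        _ ≤ ‖w‖ * ‖v‖ := mul_le_mul h1 h2 (abs_nonneg _) (norm_nonneg _)
    linarith [this]
  refine ⟨φ.mkContinuous (‖w‖ * T) hφbound, fun v => rfl, ?_⟩
  rw [hasFDerivAt_iff_isLittleO_nhds_zero]
  rw [Asymptotics.isLittleO_iff]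
  intro ε hε
  set R : ℝ := ‖u‖ + 1 with hR
  have hK : IsCompact (Set.Icc (-R) R) := isCompact_Icc
  have huc := hK.uniformContinuousOn_of_continuous hg.continuousOn
  set ε' : ℝ := ε / (T + 1) with hε'
  have hε'0 : 0 < ε' := by positivity
  obtain ⟨δ, hδ0, hδ⟩ := (Metric.uniformContinuousOn_iff_le).1 huc ε' hε'0
  have hmin : 0 < min δ 1 := lt_min hδ0 one_pos
  filter_upwards [Metric.ball_mem_nhds (0 : C(S, ℝ)) hmin] with v hv
  rw [mem_ball_zero_iff] at hv
  have hv1 : ‖v‖ ≤ 1 := (hv.trans_le (min_le_right _ _)).le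
  have hvδ : ‖v‖ ≤ δ := (hv.trans_le (min_le_left _ _)).le
  -- pointwise mean value estimate
  have point : ∀ θ : S, ‖f (u θ + v θ) - f (u θ) - deriv f (u θ) * v θ‖ ≤ ε' * ‖v‖ := by
    intro θ
    set a : ℝ := u θ with ha
    set b : ℝ := u θ + v θ with hb
    have hva : |v θ| ≤ ‖v‖ := v.norm_coe_le_norm θ
    have hua : |a| ≤ ‖u‖ := u.norm_coe_le_norm θ
    have haK : ∀ x ∈ Set.uIcc a b, x ∈ Set.Icc (-R) R := by
      intro x hx
      rw [Set.mem_uIcc] at hx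
      constructor <;> rcases hx with ⟨h1, h2⟩ | ⟨h1, h2⟩ <;>
        cases' abs_le.1 hva with l1 l2 <;> cases' abs_le.1 hua with m1 m2 <;>
        simp only [hR, hb] <;> linarith
    have hax : a ∈ Set.uIcc a b := Set.left_mem_uIcc
    have hbx : b ∈ Set.uIcc a b := Set.right_mem_uIcc
    have hd : ∀ x ∈ Set.uIcc a b,
        HasDerivWithinAt (fun x => f x - deriv f a * x)
          (deriv f x - deriv f a) (Set.uIcc a b) x := by
      intro x _
      exact ((hfd x).hasDerivAt.sub
        (by simpa using (hasDerivAt_id x).const_mul (deriv f a))).hasDerivWithinAt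
    have hbd : ∀ x ∈ Set.uIcc a b, ‖deriv f x - deriv f a‖ ≤ ε' := by
      intro x hx
      have hdist : dist x a ≤ δ := by
        have := Real.dist_le_of_mem_uIcc hx hax
        have hab : dist a b ≤ δ := by
          rw [Real.dist_eq]
          simp only [hb]
          calc |a - (a + v θ)| = |v θ| := by rw [abs_sub_comm]; ring_nf
            _ ≤ δ := hva.trans hvδ
        calc dist x a ≤ dist a b := this
          _ ≤ δ := hab
      exact hδ x (haK x hx) a (haK a hax) hdist
    have := Convex.norm_image_sub_le_of_norm_hasDerivWithin_le hd hbd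
      (convex_uIcc a b) hax hbx
    have heq : (f b - deriv f a * b) - (f a - deriv f a * a)
        = f (u θ + v θ) - f (u θ) - deriv f (u θ) * v θ := by
      simp only [hb, ha]; ring
    rw [heq] at this
    have hba : b - a = v θ := by simp [hb, ha]
    rw [hba] at this
    simp only [Real.norm_eq_abs] at this ⊢
    exact this.trans (mul_le_mul_of_nonneg_left hva hε'0.le)
  -- integrate the estimate
  have hint1 : Integrable (fun θ : S => f (u θ + v θ)) :=
    key _ (hfc.comp (u.continuous.add v.continuous))
  have hint2 : Integrable (fun θ : S => f (u θ)) := key _ (hfc.comp u.continuous)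
  have hint3 : Integrable (fun θ : S => deriv f (u θ) * v θ) :=
    key _ ((hg.comp u.continuous).mul v.continuous)
  have hFs : F (u + v) - F u - (φ.mkContinuous (‖w‖ * T) hφbound) v
      = ∫ θ : S, (f (u θ + v θ) - f (u θ) - deriv f (u θ) * v θ) := by
    rw [hF (u + v), hF u]
    have : (φ.mkContinuous (‖w‖ * T) hφbound) v = ∫ θ : S, deriv f (u θ) * v θ := rfl
    have e1 : ∫ θ : S, (f (u θ + v θ) - f (u θ) - deriv f (u θ) * v θ)
        = (∫ θ : S, (f (u θ + v θ) - f (u θ))) - ∫ θ : S, deriv f (u θ) * v θ :=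
      integral_sub (hint1.sub hint2) hint3
    have e2 : ∫ θ : S, (f (u θ + v θ) - f (u θ))
        = (∫ θ : S, f (u θ + v θ)) - ∫ θ : S, f (u θ) := integral_sub hint1 hint2
    rw [this]
    simp only [ContinuousMap.add_apply]
    rw [e1, e2]
  rw [hFs]
  have hb : ‖∫ θ : S, (f (u θ + v θ) - f (u θ) - deriv f (u θ) * v θ)‖
      ≤ (ε' * ‖v‖) * T := by
    refine norm_integral_le_of_norm_le_const ?_
    filter_upwards with θ using point θ
  refine hb.trans ?_
  have : ε' * T ≤ ε := by
    rw [hε']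
    rw [div_mul_eq_mul_div, div_le_iff₀ (by positivity)]
    nlinarith
  nlinarith [norm_nonneg v, hε'0.le]
end

section
/- Let f : ℝ → ℝ be twice continuously differentiable (ContDiff ℝ 2). Let X = C(AddCircle (2π), ℝ) with the supremum norm and μ the Haar measure on AddCircle (2π), and define F : X → ℝ by F(u) = ∫ f(u(θ)) dμ(θ). Then there is a map D : X → (X →L[ℝ] ℝ) with D(u)(v) = ∫ f′(u(θ))·v(θ) dμ(θ), such that for every u ∈ X: F is Fréchet differentiable at u with derivative D(u), and D is Fréchet differentiable at u with derivative the continuous bilinear map (v, w) ↦ ∫ f″(u(θ))·v(θ)·w(θ) dμ(θ). -/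
open Real MeasureTheory

namespace SDLF

noncomputable section

local notation "K" => AddCircle (2 * π)
local notation "X" => C(AddCircle (2 * π), ℝ)

lemma cm_integrable (h : X) : Integrable (fun θ : K => h θ) :=
  (BoundedContinuousFunction.integrable volume (BoundedContinuousFunction.mkOfCompact h))

/-- The total mass of the circle. -/
def T : ℝ := (volume (Set.univ : Set K)).toReal

lemma T_nonneg : 0 ≤ T := ENNReal.toReal_nonneg

/-- `lmap h` is the continuous linear functional `v ↦ ∫ h θ * v θ`. -/
def lmap (h : X) : X →L[ℝ] ℝ :=
  LinearMap.mkContinuous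
    { toFun := fun v => ∫ θ : K, h θ * v θ
      map_add' := fun v w => by
        have h1 : Integrable (fun θ : K => h θ * v θ) := by
          simpa using cm_integrable (h * v)
        have h2 : Integrable (fun θ : K => h θ * w θ) := by
          simpa using cm_integrable (h * w)
        simp only [ContinuousMap.add_apply, mul_add]
        exact integral_add h1 h2
      map_smul' := fun c v => by
        simp only [ContinuousMap.smul_apply, smul_eq_mul, RingHom.id_apply]
        rw [← integral_const_mul]
        congr 1; ext θ; ring }
    (‖h‖ * T)
    (fun v => by
      have : ∀ θ : K, ‖h θ * v θ‖ ≤ ‖h‖ * ‖v‖ := fun θ => by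
        rw [norm_mul]
        exact mul_le_mul (h.norm_coe_le_norm θ) (v.norm_coe_le_norm θ)
          (norm_nonneg _) (norm_nonneg _)
      calc ‖∫ θ : K, h θ * v θ‖ ≤ (‖h‖ * ‖v‖) * T :=
            norm_integral_le_of_norm_le_const (Filter.Eventually.of_forall this)
        _ = ‖h‖ * T * ‖v‖ := by ring)

@[simp] lemma lmap_apply (h v : X) : lmap h v = ∫ θ : K, h θ * v θ := rfl

/-- Composition with a continuous function, as a continuous map. -/
def cComp (g : ℝ → ℝ) (hg : Continuous g) (u : X) : X :=
  (ContinuousMap.mk g hg).comp u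

@[simp] lemma cComp_apply (g : ℝ → ℝ) (hg : Continuous g) (u : X) (θ : K) :
    cComp g hg u θ = g (u θ) := rfl

/-- Key pointwise estimate from uniform continuity of the derivative. -/
lemma key (g : ℝ → ℝ) (hg : ContDiff ℝ 1 g) (u : X) {c : ℝ} (hc : 0 < c) :
    ∃ δ > 0, ∀ v : X, ‖v‖ < δ → ∀ θ : K,
      |g (u θ + v θ) - g (u θ) - deriv g (u θ) * v θ| ≤ c * ‖v‖ := by
  have hgd : Differentiable ℝ g := hg.differentiable one_ne_zero
  have hg' : Continuous (deriv g) := hg.continuous_deriv le_rfl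
  set R := ‖u‖ with hR
  have hRnn : 0 ≤ R := norm_nonneg u
  set s : Set ℝ := Set.Icc (-(R + 1)) (R + 1) with hs
  have hcs : IsCompact s := isCompact_Icc
  have huc : UniformContinuousOn (deriv g) s :=
    hcs.uniformContinuousOn_of_continuous hg'.continuousOn
  obtain ⟨δ₀, hδ₀, hmod⟩ := Metric.uniformContinuousOn_iff.mp huc c hc
  refine ⟨min δ₀ 1, by positivity, fun v hv θ => ?_⟩
  set a := u θ with ha
  set t := v θ with ht
  have hat : |a| ≤ R := u.norm_coe_le_norm θ
  have htv : |t| ≤ ‖v‖ := v.norm_coe_le_norm θ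
  have ht1 : |t| ≤ 1 := htv.trans (hv.le.trans (min_le_right _ _))
  have htδ : |t| < δ₀ := lt_of_le_of_lt htv (lt_of_lt_of_le hv (min_le_left _ _))
  -- membership facts
  have hsub : ∀ x ∈ Set.uIcc a (a + t), |x - a| ≤ |t| := by
    intro x hx
    rw [Set.uIcc_eq_union] at hx
    rcases hx with ⟨h1, h2⟩ | ⟨h1, h2⟩ <;>
      (rw [abs_le]; constructor <;>
        linarith [neg_abs_le t, le_abs_self t, abs_nonneg t])
  have hmem : ∀ x ∈ Set.uIcc a (a + t), x ∈ s := by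
    intro x hx
    have := hsub x hx
    constructor
    · have := abs_le.mp this; have := abs_le.mp hat
      cases' abs_le.mp (hsub x hx) with h1 h2
      cases' abs_le.mp hat with h3 h4
      linarith
    · cases' abs_le.mp (hsub x hx) with h1 h2
      cases' abs_le.mp hat with h3 h4
      linarith
  have hderiv : ∀ x ∈ Set.uIcc a (a + t),
      HasDerivWithinAt (fun x => g x - deriv g a * x) (deriv g x - deriv g a)
        (Set.uIcc a (a + t)) x := by
    intro x _
    have h1 : HasDerivAt (fun x => g x - deriv g a * x) (deriv g x - deriv g a) x := by
      exact (hgd x).hasDerivAt.sub (by simpa using (hasDerivAt_id x).const_mul (deriv g a))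
    exact h1.hasDerivWithinAt
  have hbound : ∀ x ∈ Set.uIcc a (a + t), ‖deriv g x - deriv g a‖ ≤ c := by
    intro x hx
    have hxs : x ∈ s := hmem x hx
    have has : a ∈ s := by
      constructor
      · cases' abs_le.mp hat with h3 h4; linarith
      · cases' abs_le.mp hat with h3 h4; linarith
    have hd : dist x a < δ₀ := lt_of_le_of_lt (by rw [Real.dist_eq]; exact hsub x hx) htδ
    have := hmod x hxs a has hd
    rw [Real.dist_eq] at this
    exact this.le
  have := Convex.norm_image_sub_le_of_norm_hasDerivWithin_le hderiv hbound
    (convex_uIcc a (a + t)) (Set.left_mem_uIcc) (Set.right_mem_uIcc)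
  have heq : (fun x => g x - deriv g a * x) (a + t) - (fun x => g x - deriv g a * x) a
      = g (a + t) - g a - deriv g a * t := by simp; ring
  rw [heq] at this
  simp only [add_sub_cancel_left] at this
  calc |g (a + t) - g a - deriv g a * t| ≤ c * ‖t‖ := this
    _ ≤ c * ‖v‖ := by
        apply mul_le_mul_of_nonneg_left _ hc.le
        simpa using htv


lemma lmap_add (h₁ h₂ : X) : lmap (h₁ + h₂) = lmap h₁ + lmap h₂ := by
  ext w
  have i1 : Integrable (fun θ : K => h₁ θ * w θ) := by simpa using cm_integrable (h₁ * w)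
  have i2 : Integrable (fun θ : K => h₂ θ * w θ) := by simpa using cm_integrable (h₂ * w)
  simp only [lmap_apply, ContinuousLinearMap.add_apply, ContinuousMap.add_apply, add_mul]
  exact integral_add i1 i2

lemma lmap_smul (c : ℝ) (h : X) : lmap (c • h) = c • lmap h := by
  ext w
  simp only [lmap_apply, ContinuousLinearMap.smul_apply, ContinuousMap.smul_apply,
    smul_eq_mul, mul_assoc]
  exact integral_const_mul c _

end

end SDLF

set_option maxHeartbeats 1000000 in
open SDLF in
/-- For `f : ℝ → ℝ` twice continuously differentiable, the nonlinear functional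
`F(u) = ∫_{S¹} f(u(θ)) dθ` on the Banach space `C(S¹, ℝ)` of continuous functions on the
circle `S¹ = ℝ/2πℤ` (supremum norm, Haar measure) has first derivative
`D(u)(v) = ∫ f′(u(θ))·v(θ) dθ` at every `u`, and the map `D` is itself Fréchet
differentiable at every `u` with derivative the continuous bilinear map
`(v, w) ↦ ∫ f″(u(θ))·v(θ)·w(θ) dθ`. -/
theorem second_derivative_of_loop_functional
    (f : ℝ → ℝ) (hf : ContDiff ℝ 2 f)
    (F : C(AddCircle (2 * π), ℝ) → ℝ)
    (hF : ∀ u : C(AddCircle (2 * π), ℝ), F u = ∫ θ : AddCircle (2 * π), f (u θ)) :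
    ∃ D : C(AddCircle (2 * π), ℝ) → (C(AddCircle (2 * π), ℝ) →L[ℝ] ℝ),
      (∀ u v : C(AddCircle (2 * π), ℝ),
        D u v = ∫ θ : AddCircle (2 * π), deriv f (u θ) * v θ) ∧
      (∀ u : C(AddCircle (2 * π), ℝ),
        HasFDerivAt F (D u) u ∧
        ∃ B : C(AddCircle (2 * π), ℝ) →L[ℝ] (C(AddCircle (2 * π), ℝ) →L[ℝ] ℝ),
          (∀ v w : C(AddCircle (2 * π), ℝ),
            B v w = ∫ θ : AddCircle (2 * π), deriv (deriv f) (u θ) * v θ * w θ) ∧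
          HasFDerivAt D B u) := by
  classical
  have hf1 : ContDiff ℝ 1 f := hf.of_le (by norm_num)
  have hdf : ContDiff ℝ 1 (deriv f) :=
    ((contDiff_succ_iff_deriv (n := 1) (f := f)).mp (by exact_mod_cast hf)).2.2
  have hfc : Continuous f := hf.continuous
  have hg1 : Continuous (deriv f) := hdf.continuous
  have hg2 : Continuous (deriv (deriv f)) := hdf.continuous_deriv le_rfl
  set D : C(AddCircle (2 * π), ℝ) → (C(AddCircle (2 * π), ℝ) →L[ℝ] ℝ) :=
    fun u => lmap (cComp (deriv f) hg1 u) with hD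
  refine ⟨D, fun u v => rfl, fun u => ?_⟩
  have hT : 0 ≤ T := T_nonneg
  constructor
  · -- F differentiable at u with derivative D u
    rw [hasFDerivAt_iff_isLittleO_nhds_zero, Asymptotics.isLittleO_iff]
    intro c hc
    have hc' : 0 < c / (T + 1) := div_pos hc (by linarith)
    obtain ⟨δ, hδ, hkey⟩ := key f hf1 u hc'
    filter_upwards [Metric.ball_mem_nhds (0 : C(AddCircle (2 * π), ℝ)) hδ] with v hv
    have hvn : ‖v‖ < δ := by simpa [mem_ball_zero_iff] using hv
    have hint1 : Integrable (fun θ : AddCircle (2 * π) => f ((u + v) θ)) := by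
      simpa using cm_integrable (cComp f hfc (u + v))
    have hint2 : Integrable (fun θ : AddCircle (2 * π) => f (u θ)) := by
      simpa using cm_integrable (cComp f hfc u)
    have hint3 : Integrable (fun θ : AddCircle (2 * π) => deriv f (u θ) * v θ) := by
      simpa using cm_integrable (cComp (deriv f) hg1 u * v)
    have hDv : D u v = ∫ θ : AddCircle (2 * π), deriv f (u θ) * v θ := rfl
    have heq : F (u + v) - F u - D u v
        = ∫ θ : AddCircle (2 * π), (f ((u + v) θ) - f (u θ) - deriv f (u θ) * v θ) := by
      have hint12 : Integrable (fun θ : AddCircle (2 * π) => f ((u + v) θ) - f (u θ)) :=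
        hint1.sub hint2
      rw [hF, hF, hDv, ← integral_sub hint1 hint2, ← integral_sub hint12 hint3]
    rw [heq]
    have hb : ∀ θ : AddCircle (2 * π),
        ‖f ((u + v) θ) - f (u θ) - deriv f (u θ) * v θ‖ ≤ (c / (T + 1)) * ‖v‖ := by
      intro θ
      simpa [ContinuousMap.add_apply] using hkey v hvn θ
    calc ‖∫ θ : AddCircle (2 * π), (f ((u + v) θ) - f (u θ) - deriv f (u θ) * v θ)‖
        ≤ ((c / (T + 1)) * ‖v‖) * T :=
          norm_integral_le_of_norm_le_const (Filter.Eventually.of_forall hb)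
      _ ≤ c * ‖v‖ := by
          have h1 : (c / (T + 1)) * (T + 1) = c := div_mul_cancel₀ c (by linarith)
          nlinarith [norm_nonneg v, hc'.le]
  · -- second derivative
    set h2 : C(AddCircle (2 * π), ℝ) := cComp (deriv (deriv f)) hg2 u with hh2
    set blin : C(AddCircle (2 * π), ℝ) →ₗ[ℝ]
        (C(AddCircle (2 * π), ℝ) →ₗ[ℝ] ℝ) :=
      { toFun := fun v => (lmap (h2 * v)).toLinearMap
        map_add' := fun v v' => by
          show (lmap (h2 * (v + v'))).toLinearMap
            = (lmap (h2 * v)).toLinearMap + (lmap (h2 * v')).toLinearMap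
          rw [mul_add, lmap_add]; rfl
        map_smul' := fun c v => by
          show (lmap (h2 * (c • v))).toLinearMap = c • (lmap (h2 * v)).toLinearMap
          rw [mul_smul_comm, lmap_smul]; rfl } with hblin
    have hbound : ∀ v w : C(AddCircle (2 * π), ℝ), ‖blin v w‖ ≤ (‖h2‖ * T) * ‖v‖ * ‖w‖ := by
      intro v w
      have hb : ∀ θ : AddCircle (2 * π), ‖(h2 * v) θ * w θ‖ ≤ ‖h2‖ * ‖v‖ * ‖w‖ := by
        intro θ
        rw [ContinuousMap.mul_apply, norm_mul, norm_mul]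
        gcongr <;> first
          | exact ContinuousMap.norm_coe_le_norm _ θ
          | positivity
      have : ‖∫ θ : AddCircle (2 * π), (h2 * v) θ * w θ‖ ≤ (‖h2‖ * ‖v‖ * ‖w‖) * T :=
        norm_integral_le_of_norm_le_const (Filter.Eventually.of_forall hb)
      calc ‖blin v w‖ = ‖∫ θ : AddCircle (2 * π), (h2 * v) θ * w θ‖ := rfl
        _ ≤ (‖h2‖ * ‖v‖ * ‖w‖) * T := this
        _ = (‖h2‖ * T) * ‖v‖ * ‖w‖ := by ring
    set B : C(AddCircle (2 * π), ℝ) →L[ℝ] (C(AddCircle (2 * π), ℝ) →L[ℝ] ℝ) :=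
      LinearMap.mkContinuous₂ blin (‖h2‖ * T) hbound with hB
    have hBvw : ∀ v w : C(AddCircle (2 * π), ℝ),
        B v w = ∫ θ : AddCircle (2 * π), deriv (deriv f) (u θ) * v θ * w θ := by
      intro v w
      show (∫ θ : AddCircle (2 * π), (h2 * v) θ * w θ) = _
      congr 1
    refine ⟨B, hBvw, ?_⟩
    refine (hasFDerivAt_iff_isLittleO_nhds_zero (𝕜 := ℝ) (f := D) (f' := B) (x := u)).mpr ?_
    rw [Asymptotics.isLittleO_iff]
    intro c hc
    have hc' : 0 < c / (T + 1) := div_pos hc (by linarith)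
    obtain ⟨δ, hδ, hkey⟩ := key (deriv f) hdf u hc'
    filter_upwards [Metric.ball_mem_nhds (0 : C(AddCircle (2 * π), ℝ)) hδ] with v hv
    have hvn : ‖v‖ < δ := by simpa [mem_ball_zero_iff] using hv
    refine ContinuousLinearMap.opNorm_le_bound _
      (by positivity) (fun w => ?_)
    have hint1 : Integrable (fun θ : AddCircle (2 * π) => deriv f ((u + v) θ) * w θ) := by
      simpa using cm_integrable (cComp (deriv f) hg1 (u + v) * w)
    have hint2 : Integrable (fun θ : AddCircle (2 * π) => deriv f (u θ) * w θ) := by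
      simpa using cm_integrable (cComp (deriv f) hg1 u * w)
    have hint3 : Integrable
        (fun θ : AddCircle (2 * π) => deriv (deriv f) (u θ) * v θ * w θ) := by
      simpa [mul_assoc, hh2] using cm_integrable (h2 * v * w)
    have heq : (D (u + v) - D u - B v) w
        = ∫ θ : AddCircle (2 * π),
            ((deriv f ((u + v) θ) - deriv f (u θ) - deriv (deriv f) (u θ) * v θ) * w θ) := by
      have e1 : D (u + v) w = ∫ θ : AddCircle (2 * π), deriv f ((u + v) θ) * w θ := rfl
      have e2 : D u w = ∫ θ : AddCircle (2 * π), deriv f (u θ) * w θ := rfl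
      have hint12 : Integrable
          (fun θ : AddCircle (2 * π) => deriv f ((u + v) θ) * w θ - deriv f (u θ) * w θ) :=
        hint1.sub hint2
      rw [ContinuousLinearMap.sub_apply, ContinuousLinearMap.sub_apply, e1, e2, hBvw v w,
        ← integral_sub hint1 hint2, ← integral_sub hint12 hint3]
      congr 1
      funext θ
      ring
    rw [heq]
    have hb : ∀ θ : AddCircle (2 * π),
        ‖(deriv f ((u + v) θ) - deriv f (u θ) - deriv (deriv f) (u θ) * v θ) * w θ‖
          ≤ ((c / (T + 1)) * ‖v‖) * ‖w‖ := by
      intro θ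
      rw [norm_mul]
      have h1 : ‖deriv f ((u + v) θ) - deriv f (u θ) - deriv (deriv f) (u θ) * v θ‖
          ≤ (c / (T + 1)) * ‖v‖ := by
        simpa [ContinuousMap.add_apply] using hkey v hvn θ
      have h2' : ‖w θ‖ ≤ ‖w‖ := w.norm_coe_le_norm θ
      exact mul_le_mul h1 h2' (norm_nonneg _) (by positivity)
    calc ‖∫ θ : AddCircle (2 * π),
            ((deriv f ((u + v) θ) - deriv f (u θ) - deriv (deriv f) (u θ) * v θ) * w θ)‖
        ≤ (((c / (T + 1)) * ‖v‖) * ‖w‖) * T :=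
          norm_integral_le_of_norm_le_const (Filter.Eventually.of_forall hb)
      _ ≤ c * ‖v‖ * ‖w‖ := by
          have h1 : (c / (T + 1)) * (T + 1) = c := div_mul_cancel₀ c (by linarith)
          nlinarith [norm_nonneg v, norm_nonneg w, hc'.le, T_nonneg,
            mul_nonneg (norm_nonneg v) (norm_nonneg w)]
end

section
/- Let p : E → Z be a covering map of topological spaces, let x, y ∈ Z, let e ∈ E with p(e) = x, and suppose the fiber p⁻¹({y}) has exactly two elements. Let γ₁, γ₂, γ₃ be paths from x to y in Z, and for each pair (i, j) ∈ {(1,2), (2,3), (1,3)} let L_{ij} : [0,1] → E be a continuous map with p ∘ L_{ij} = γ_i.trans γ_j.symm (the fused loop) and L_{ij}(0) = e. Then L₁₃(1) = e if and only if (L₁₂(1) = e ↔ L₂₃(1) = e). Equivalently, the ℤ₂-valued holonomy of a double cover, h(l) = 0 iff the lift of l starting at e is closed, satisfies the fusion condition h(l₁₂) + h(l₂₃) = h(l₁₃). -/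
open unitInterval

private lemma fiber_card_eq_aux {E Z : Type*} [TopologicalSpace E] [TopologicalSpace Z]
    {p : E → Z} (hp : IsCoveringMap p) {x y : Z} (γ : Path x y) :
    Nat.card (p ⁻¹' {x} : Set E) = Nat.card (p ⁻¹' {y} : Set E) := by
  have hlc : IsLocallyConstant (fun z => Nat.card (p ⁻¹' {z} : Set E)) := by
    rw [IsLocallyConstant.iff_exists_open]
    intro z
    obtain ⟨_, U, hzU, hU, _, H, hH⟩ := hp z
    refine ⟨U, hU, hzU, fun w hw => Nat.card_congr ?_⟩
    exact
      { toFun := fun e => (H ⟨e.1, show p e.1 ∈ U from (e.2 : p e.1 = w).symm ▸ hw⟩).2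
        invFun := fun i => ⟨(H.symm (⟨w, hw⟩, i)).1, by
          have h := hH (H.symm (⟨w, hw⟩, i))
          rw [H.apply_symm_apply] at h
          exact h.symm⟩
        left_inv := fun e => by
          apply Subtype.ext
          have h1 : (H ⟨e.1, show p e.1 ∈ U from (e.2 : p e.1 = w).symm ▸ hw⟩).1 = ⟨w, hw⟩ :=
            Subtype.ext ((hH _).trans e.2)
          have h2 : ((⟨w, hw⟩ : U), (H ⟨e.1, show p e.1 ∈ U from (e.2 : p e.1 = w).symm ▸ hw⟩).2)
              = H ⟨e.1, show p e.1 ∈ U from (e.2 : p e.1 = w).symm ▸ hw⟩ := Prod.ext h1.symm rfl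
          simp only [h2, H.symm_apply_apply]
        right_inv := fun i => by simp }
  have := (hlc.comp_continuous γ.continuous).apply_eq_of_preconnectedSpace 0 1
  simpa using this

private lemma eq_or_eq_of_card_two {α : Type*} (h : Nat.card α = 2) {a b c : α}
    (hab : a ≠ b) : c = a ∨ c = b := by
  rw [Nat.card_eq_two_iff] at h
  obtain ⟨u, v, huv, h⟩ := h
  have mem : ∀ x : α, x = u ∨ x = v := fun x => by
    have : x ∈ ({u, v} : Set α) := h ▸ Set.mem_univ x
    simpa using this
  rcases mem a with rfl | rfl <;> rcases mem b with rfl | rfl <;>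
    rcases mem c with rfl | rfl <;> tauto

/-- Holonomy of a double cover satisfies the fusion condition.  Let `p : E → Z` be a
covering map, `e` a point over `x`, and suppose the fiber over `y` has exactly two
elements.  Given paths `γ₁, γ₂, γ₃` from `x` to `y` and lifts `L₁₂, L₂₃, L₁₃` starting
at `e` of the fused loops `γᵢ.trans γⱼ.symm`, the lift `L₁₃` is closed if and only if
`L₁₂` is closed exactly when `L₂₃` is closed; i.e. the `ℤ₂`-holonomy satisfies
`h(l₁₂) + h(l₂₃) = h(l₁₃)`. -/
theorem double_cover_holonomy_fusion {E Z : Type*} [TopologicalSpace E] [TopologicalSpace Z]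
    (p : E → Z) (hp : IsCoveringMap p) (x y : Z) (e : E) (hex : p e = x)
    (hfib : Nat.card (p ⁻¹' {y} : Set E) = 2)
    (γ₁ γ₂ γ₃ : Path x y)
    (L₁₂ L₂₃ L₁₃ : I → E)
    (hc₁₂ : Continuous L₁₂) (hc₂₃ : Continuous L₂₃) (hc₁₃ : Continuous L₁₃)
    (hl₁₂ : ∀ t : I, p (L₁₂ t) = (γ₁.trans γ₂.symm) t)
    (hl₂₃ : ∀ t : I, p (L₂₃ t) = (γ₂.trans γ₃.symm) t)
    (hl₁₃ : ∀ t : I, p (L₁₃ t) = (γ₁.trans γ₃.symm) t)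
    (h0₁₂ : L₁₂ 0 = e) (h0₂₃ : L₂₃ 0 = e) (h0₁₃ : L₁₃ 0 = e) :
    L₁₃ 1 = e ↔ (L₁₂ 1 = e ↔ L₂₃ 1 = e) := by
  classical
  -- reparametrizations of the unit interval
  set sg : I → I := fun t => ⟨(t : ℝ) / 2, by
    have h1 := t.2.1; have h2 := t.2.2
    constructor <;> linarith⟩ with hsgdef
  set tu : I → I := fun t => ⟨1 - (t : ℝ) / 2, by
    have h1 := t.2.1; have h2 := t.2.2
    constructor <;> [linarith; linarith]⟩ with htudef
  have hsgc : Continuous sg := (continuous_subtype_val.div_const 2).subtype_mk _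
  have htuc : Continuous tu := (continuous_const.sub
    (continuous_subtype_val.div_const 2)).subtype_mk _
  have hsg0 : sg 0 = 0 := by simp [hsgdef, Subtype.ext_iff]
  have htu0 : tu 0 = 1 := by simp [htudef, Subtype.ext_iff]
  set half : I := ⟨1 / 2, by norm_num⟩ with hhalf
  have hsg1 : sg 1 = half := by simp [hsgdef, hhalf, Subtype.ext_iff]
  have htu1 : tu 1 = half := by
    simp [htudef, hhalf, Subtype.ext_iff]; norm_num
  -- evaluating the fused loop on the two halves
  have htranssg : ∀ (γ δ : Path x y) (t : I), (γ.trans δ.symm) (sg t) = γ t := by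
    intro γ δ t
    rw [Path.trans_apply]
    have h2 := t.2.2
    rw [dif_pos (by simp [hsgdef]; linarith)]
    congr 1
    ext
    simp [hsgdef]
    ring
  have htranstu : ∀ (γ δ : Path x y) (t : I), (γ.trans δ.symm) (tu t) = δ t := by
    intro γ δ t
    rw [Path.trans_apply]
    have h1 := t.2.1; have h2 := t.2.2
    by_cases h : (t : ℝ) = 1
    · rw [dif_pos (by simp [htudef]; linarith)]
      refine (congrArg γ (Subtype.ext (?_ : _ = ((1 : I) : ℝ)))).trans ?_
      · simp [htudef]; linarith
      · rw [γ.target, show t = 1 from Subtype.ext (by simpa using h), δ.target]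
    · have hlt : (t : ℝ) < 1 := lt_of_le_of_ne h2 h
      rw [dif_neg (by simp [htudef]; linarith)]
      show δ (unitInterval.symm _) = δ t
      congr 1
      ext
      simp [htudef, unitInterval.symm]
      ring
  -- uniqueness of lifts
  have uniq : ∀ (f g : I → E), Continuous f → Continuous g →
      (∀ t, p (f t) = p (g t)) → ∀ t₀, f t₀ = g t₀ → ∀ t, f t = g t := by
    intro f g hf hg hfg t₀ h0 t
    exact congrFun (hp.eq_of_comp_eq hf hg (funext hfg) t₀ h0) t
  -- L₁₂ and L₁₃ agree on the first half (both lift γ₁ from e)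
  have key1 : L₁₂ half = L₁₃ half := by
    have := uniq (L₁₂ ∘ sg) (L₁₃ ∘ sg) (hc₁₂.comp hsgc) (hc₁₃.comp hsgc)
      (fun t => by simp only [Function.comp_apply, hl₁₂, hl₁₃, htranssg])
      0 (by simp [hsg0, h0₁₂, h0₁₃]) 1
    simpa [hsg1] using this
  -- L₁₂ is closed iff the two lifts of γ₂ agree, i.e. L₁₂ half = L₂₃ half
  have key12 : L₁₂ 1 = e ↔ L₁₂ half = L₂₃ half := by
    have hfg : ∀ t, p ((L₁₂ ∘ tu) t) = p ((L₂₃ ∘ sg) t) := fun t => by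
      simp only [Function.comp_apply, hl₁₂, hl₂₃, htranssg, htranstu]
    constructor
    · intro h
      have := uniq (L₁₂ ∘ tu) (L₂₃ ∘ sg) (hc₁₂.comp htuc) (hc₂₃.comp hsgc) hfg
        0 (by simp [htu0, hsg0, h, h0₂₃]) 1
      simpa [htu1, hsg1] using this
    · intro h
      have := uniq (L₁₂ ∘ tu) (L₂₃ ∘ sg) (hc₁₂.comp htuc) (hc₂₃.comp hsgc) hfg
        1 (by simp [htu1, hsg1, h]) 0
      simpa [htu0, hsg0, h0₂₃] using this
  -- L₂₃ 1 = L₁₃ 1 iff the two lifts of γ₃ agree, i.e. L₂₃ half = L₁₃ half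
  have key23 : L₂₃ 1 = L₁₃ 1 ↔ L₂₃ half = L₁₃ half := by
    have hfg : ∀ t, p ((L₂₃ ∘ tu) t) = p ((L₁₃ ∘ tu) t) := fun t => by
      simp only [Function.comp_apply, hl₂₃, hl₁₃, htranstu]
    constructor
    · intro h
      have := uniq (L₂₃ ∘ tu) (L₁₃ ∘ tu) (hc₂₃.comp htuc) (hc₁₃.comp htuc) hfg
        0 (by simp [htu0, h]) 1
      simpa [htu1] using this
    · intro h
      have := uniq (L₂₃ ∘ tu) (L₁₃ ∘ tu) (hc₂₃.comp htuc) (hc₁₃.comp htuc) hfg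
        1 (by simp [htu1, h]) 0
      simpa [htu0] using this
  by_cases hab : L₁₂ half = L₂₃ half
  · have h12 : L₁₂ 1 = e := key12.2 hab
    have hcd : L₂₃ 1 = L₁₃ 1 := key23.2 (hab.symm.trans key1)
    rw [← hcd]
    simp [h12]
  · have h12 : L₁₂ 1 ≠ e := fun h => hab (key12.1 h)
    have hcd : L₂₃ 1 ≠ L₁₃ 1 := fun h => hab (key1.trans (key23.1 h).symm)
    -- the fiber over x has exactly two elements
    have fibx : Nat.card (p ⁻¹' {x} : Set E) = 2 :=
      (fiber_card_eq_aux hp γ₁).trans hfib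
    have he : e ∈ p ⁻¹' {x} := hex
    have hc : L₂₃ 1 ∈ p ⁻¹' {x} := by
      simp only [Set.mem_preimage, hl₂₃, Set.mem_singleton_iff]
      exact (γ₂.trans γ₃.symm).target
    have hd : L₁₃ 1 ∈ p ⁻¹' {x} := by
      simp only [Set.mem_preimage, hl₁₃, Set.mem_singleton_iff]
      exact (γ₁.trans γ₃.symm).target
    have hor : e = L₂₃ 1 ∨ e = L₁₃ 1 := by
      have hne : (⟨L₂₃ 1, hc⟩ : (p ⁻¹' {x} : Set E)) ≠ ⟨L₁₃ 1, hd⟩ :=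
        fun h => hcd (congrArg Subtype.val h)
      rcases eq_or_eq_of_card_two fibx (c := ⟨e, he⟩) hne with h | h
      · exact Or.inl (congrArg Subtype.val h)
      · exact Or.inr (congrArg Subtype.val h)
    simp only [h12, false_iff]
    rcases hor with h | h
    · constructor
      · intro hd' hc'
        exact hcd (hc'.trans hd'.symm)
      · intro hc'
        exact absurd h.symm hc'
    · constructor
      · intro _ hc'
        exact hcd (hc'.trans h)
      · intro _
        exact h.symm
end

section
/- Let F be a contravariant functor from topological spaces to abelian groups (a functor TopCatᵒᵖ ⥤ AddCommGrp), let M be a topological space and m̄ ∈ M a point. Let π₁, π₂ : M × M → M and π₁₂, π₁₃, π₂₃ : M × M × M → M × M denote the continuous coordinate projections, and let i₁ : M → M × M, x ↦ (m̄, x), and i₂ : M × M → M × M × M, (x, y) ↦ (m̄, x, y). If α ∈ F(M × M) satisfies F(π₂₃)(α) − F(π₁₃)(α) + F(π₁₂)(α) = 0 in F(M × M × M), then α = F(π₂)(β) − F(π₁)(β), where β = F(i₁)(α) ∈ F(M). -/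
open CategoryTheory Opposite

variable (M : Type) [TopologicalSpace M]

/-- First coordinate projection `M × M → M` as a morphism of `TopCat`. -/
def proj₁ : TopCat.of (M × M) ⟶ TopCat.of M := TopCat.ofHom ⟨Prod.fst, continuous_fst⟩

/-- Second coordinate projection `M × M → M` as a morphism of `TopCat`. -/
def proj₂ : TopCat.of (M × M) ⟶ TopCat.of M := TopCat.ofHom ⟨Prod.snd, continuous_snd⟩

/-- The projection `M × M × M → M × M` keeping the first and second coordinates. -/
def proj₁₂ : TopCat.of (M × M × M) ⟶ TopCat.of (M × M) :=
  TopCat.ofHom ⟨fun q => (q.1, q.2.1), by fun_prop⟩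

/-- The projection `M × M × M → M × M` keeping the first and third coordinates. -/
def proj₁₃ : TopCat.of (M × M × M) ⟶ TopCat.of (M × M) :=
  TopCat.ofHom ⟨fun q => (q.1, q.2.2), by fun_prop⟩

/-- The projection `M × M × M → M × M` keeping the second and third coordinates. -/
def proj₂₃ : TopCat.of (M × M × M) ⟶ TopCat.of (M × M) := TopCat.ofHom ⟨Prod.snd, continuous_snd⟩

/-- The embedding `M → M × M`, `x ↦ (m₀, x)`, as a morphism of `TopCat`. -/
def emb₁ (m₀ : M) : TopCat.of M ⟶ TopCat.of (M × M) :=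
  TopCat.ofHom ⟨fun x => (m₀, x), by fun_prop⟩

/-- The embedding `M × M → M × M × M`, `(x, y) ↦ (m₀, x, y)`, as a morphism of `TopCat`. -/
def emb₂ (m₀ : M) : TopCat.of (M × M) ⟶ TopCat.of (M × M × M) :=
  TopCat.ofHom ⟨fun q => (m₀, q), by fun_prop⟩

/-- For a contravariant functor `F` from topological spaces to abelian groups, any class
`α ∈ F(M × M)` satisfying the simplicial cocycle identity
`F(π₂₃)(α) − F(π₁₃)(α) + F(π₁₂)(α) = 0` in `F(M × M × M)` splits as
`α = F(π₂)(β) − F(π₁)(β)`, where `β = F(i₁)(α) ∈ F(M)` is the pull-back of `α` along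
`i₁ : x ↦ (m₀, x)` for a chosen base point `m₀ ∈ M`. -/
theorem simplicial_cocycle_splits (F : TopCatᵒᵖ ⥤ AddCommGrpCat) (m₀ : M)
    (α : F.obj (op (TopCat.of (M × M))))
    (hα : F.map (proj₂₃ M).op α - F.map (proj₁₃ M).op α + F.map (proj₁₂ M).op α = 0) :
    α = F.map (proj₂ M).op (F.map (emb₁ M m₀).op α)
        - F.map (proj₁ M).op (F.map (emb₁ M m₀).op α) := by
  have h1 : emb₂ M m₀ ≫ proj₂₃ M = 𝟙 _ := rfl
  have h2 : emb₂ M m₀ ≫ proj₁₃ M = proj₂ M ≫ emb₁ M m₀ := rfl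
  have h3 : emb₂ M m₀ ≫ proj₁₂ M = proj₁ M ≫ emb₁ M m₀ := rfl
  have key := congrArg (F.map (emb₂ M m₀).op) hα
  simp only [map_sub, map_add, map_zero] at key
  have e1 : F.map (emb₂ M m₀).op (F.map (proj₂₃ M).op α) = α := by
    rw [← CategoryTheory.comp_apply, ← F.map_comp, ← op_comp, h1, op_id, F.map_id]; rfl
  have e2 : F.map (emb₂ M m₀).op (F.map (proj₁₃ M).op α)
      = F.map (proj₂ M).op (F.map (emb₁ M m₀).op α) := by
    rw [← CategoryTheory.comp_apply, ← F.map_comp, ← op_comp, h2, op_comp, F.map_comp]; rfl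
  have e3 : F.map (emb₂ M m₀).op (F.map (proj₁₂ M).op α)
      = F.map (proj₁ M).op (F.map (emb₁ M m₀).op α) := by
    rw [← CategoryTheory.comp_apply, ← F.map_comp, ← op_comp, h3, op_comp, F.map_comp]; rfl
  rw [e1, e2, e3] at key
  rw [eq_sub_iff_add_eq, ← sub_eq_zero, ← key]
  abel
end
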